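/- Insecurity of the modified protocol from the Remark (the server can distinguish indices): for a database A = (a^1,…,a^ℓ) ∈ Σ^ℓ, define for each index i ∈ Fin ℓ the vector ψ^{(i)} ∈ ℂ^{Σ × (Fin ℓ → ZMod 2)} by ψ^{(i)}(x,q) = 2^{-r/2} · (-1)^{(x·a^i).val} if q(k) = x·a^k for all k ∈ Fin ℓ, and 0 otherwise. Then for any i, j ∈ Fin ℓ, the inner product ⟨ψ^{(i)}, ψ^{(j)}⟩ equals 1 if a^i = a^j and equals 0 if a^i ≠ a^j. In particular, if the items a^1,…,a^ℓ are pairwise distinct, the vectors ψ^{(1)},…,ψ^{(ℓ)} form an orthonormal family, so the server can recover the index i with probability one. -/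

import Mathlib

open scoped BigOperators

/-- The item set `Σ = {0,1}^r`, identified with functions `Fin r → ZMod 2`. -/
abbrev Sig (r : ℕ) := Fin r → ZMod 2

/-- Dot product `u · v = ∑ k, u k * v k` in `ZMod 2`. -/
def dot {r : ℕ} (u v : Sig r) : ZMod 2 := ∑ k, u k * v k

/-- The amplitude `2^{-r/2}` as a complex number. -/
noncomputable def amp (r : ℕ) : ℂ := ((Real.sqrt (2 ^ r) : ℝ) : ℂ)⁻¹

/-- The state `ψ^{(i)}` of the modified (insecure) protocol from the Remark, where
register `R'` is left in the state `|0⟩`. -/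
noncomputable def psiRemark (r ℓ : ℕ) (A : Fin ℓ → Sig r) (i : Fin ℓ) :
    Sig r × (Fin ℓ → ZMod 2) → ℂ := fun p =>
  if ∀ k : Fin ℓ, p.2 k = dot p.1 (A k)
  then amp r * (-1 : ℂ) ^ (dot p.1 (A i)).val else 0

noncomputable def chi (a : ZMod 2) : ℂ := (-1 : ℂ) ^ a.val

lemma zmod2_cases : ∀ a : ZMod 2, a = 0 ∨ a = 1 := by decide

lemma chi_zero : chi 0 = 1 := by simp [chi]

lemma chi_add (a b : ZMod 2) : chi (a + b) = chi a * chi b := by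
  rcases zmod2_cases a with h | h <;> rcases zmod2_cases b with h' | h' <;>
    subst h <;> subst h' <;>
    norm_num [chi, show ZMod.val (2 : ZMod 2) = 0 by decide, ZMod.val_zero,
      show ((1 : ZMod 2)).val = 1 from rfl]

lemma chi_sum {ι : Type*} (s : Finset ι) (f : ι → ZMod 2) :
    chi (∑ k ∈ s, f k) = ∏ k ∈ s, chi (f k) := by
  classical
  induction s using Finset.induction with
  | empty => simp [chi_zero]
  | insert _ _ h ih => simp [Finset.sum_insert h, Finset.prod_insert h, chi_add, ih]

lemma sum_zmod2 (f : ZMod 2 → ℂ) : (∑ b : ZMod 2, f b) = f 0 + f 1 := by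
  have h : (Finset.univ : Finset (ZMod 2)) = {0, 1} := by decide
  rw [h, Finset.sum_insert (by decide), Finset.sum_singleton]

lemma char_sum {r : ℕ} (v : Sig r) :
    (∑ x : Sig r, chi (dot x v)) = if v = 0 then (2 : ℂ) ^ r else 0 := by
  classical
  have h1 : ∀ x : Sig r, chi (dot x v) = ∏ k, chi (x k * v k) := fun x =>
    chi_sum Finset.univ _
  simp_rw [h1]
  rw [← Fintype.prod_sum (fun k (b : ZMod 2) => chi (b * v k))]
  have h2 : ∀ k, (∑ b : ZMod 2, chi (b * v k)) = if v k = 0 then 2 else 0 := by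
    intro k
    rw [sum_zmod2]
    rcases zmod2_cases (v k) with h | h <;>
      norm_num [h, chi_zero, chi, show ((1 : ZMod 2)).val = 1 from rfl]
  simp_rw [h2]
  by_cases hv : v = 0
  · simp [hv]
  · rw [if_neg hv]
    obtain ⟨k, hk⟩ : ∃ k, v k ≠ 0 := by
      by_contra h
      push_neg at h
      exact hv (funext h)
    exact Finset.prod_eq_zero (Finset.mem_univ k) (by simp [hk])

lemma dot_add_right {r : ℕ} (x u v : Sig r) :
    dot x (u + v) = dot x u + dot x v := by
  simp [dot, mul_add, Finset.sum_add_distrib]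

/-- insecurity of the modified protocol from the Remark. The states
`ψ^{(i)}` and `ψ^{(j)}` have inner product `1` when `a^i = a^j` and `0` otherwise,
so for pairwise-distinct items they are orthonormal and the server can recover the
index `i` with probability one. -/
theorem stmt_11 (r ℓ : ℕ) (hr : 0 < r) (hℓ : 0 < ℓ) (A : Fin ℓ → Sig r)
    (i j : Fin ℓ) :
    (∑ p : Sig r × (Fin ℓ → ZMod 2),
        (starRingEnd ℂ) (psiRemark r ℓ A i p) * psiRemark r ℓ A j p) =
      if A i = A j then 1 else 0 := by
  classical
  have hcond : ∀ (x : Sig r) (y : Fin ℓ → ZMod 2),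
      (∀ k, y k = dot x (A k)) ↔ y = fun k => dot x (A k) := fun x y =>
    funext_iff.symm
  rw [Fintype.sum_prod_type]
  have hmul : ∀ (P : Prop) [Decidable P] (a b : ℂ),
      (starRingEnd ℂ) (if P then a else 0) * (if P then b else 0) =
      if P then (starRingEnd ℂ) a * b else 0 := by
    intro P _ a b; split_ifs <;> simp
  have hterm : ∀ x : Sig r,
      (∑ y : Fin ℓ → ZMod 2,
        (starRingEnd ℂ) (psiRemark r ℓ A i (x, y)) * psiRemark r ℓ A j (x, y)) =
      (amp r)^2 * chi (dot x (A i + A j)) := by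
    intro x
    simp only [psiRemark, hcond, hmul]
    rw [Finset.sum_ite_eq' Finset.univ (fun k => dot x (A k))
      (fun _ => (starRingEnd ℂ) (amp r * (-1 : ℂ) ^ (dot x (A i)).val) *
        (amp r * (-1 : ℂ) ^ (dot x (A j)).val))]
    have hamp : (starRingEnd ℂ) (amp r) = amp r := by simp [amp]
    rw [if_pos (Finset.mem_univ _), map_mul, hamp, dot_add_right, chi_add]
    simp only [chi, map_pow, map_neg, map_one]
    ring
  simp_rw [hterm]
  rw [← Finset.mul_sum, char_sum]
  have hvz : (A i + A j = 0) ↔ A i = A j := by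
    have h2 : ∀ a b : ZMod 2, a + b = 0 ↔ a = b := by decide
    constructor
    · intro h; funext k; exact (h2 _ _).mp (congrFun h k)
    · intro h; funext k; exact (h2 _ _).mpr (congrFun h k)
  rw [if_congr hvz rfl rfl]
  have h0 : (Real.sqrt (2 ^ r)) ^ 2 = (2 : ℝ) ^ r := Real.sq_sqrt (by positivity)
  have hampsq : (amp r)^2 = ((2 : ℂ) ^ r)⁻¹ := by
    rw [amp, inv_pow, ← Complex.ofReal_pow, h0]
    push_cast
    ring
  split_ifs with h
  · rw [hampsq, inv_mul_cancel₀ (by norm_num)]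
  · simp
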